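/- For every complex number x with |x| < 1, (∑_{n ∈ ℤ} (−1)^n x^{n(3n−1)}) · ∏_{m=1}^∞ (1 − x^{2m−1}) = ∑_{n ∈ ℤ} (−1)^n x^{n(3n−1)/2} (Goldbach's identity relating the pentagonal series in x and in x², corrected: the pentagonal series in x equals the pentagonal series in x² times the product over odd exponents). -/

import Mathlib

open Finset in
lemma aux_one_le_prod (g : ℕ → ℝ) (hg : ∀ i, 0 ≤ g i) (s : Finset ℕ) :
    1 ≤ ∏ i ∈ s, (1 + g i) :=
  calc (1:ℝ) = ∏ i ∈ s, 1 := by simp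
  _ ≤ ∏ i ∈ s, (1 + g i) :=
    Finset.prod_le_prod (fun i _ => by norm_num) (fun i _ => by linarith [hg i])

lemma aux_norm_prod_sub_one (f : ℕ → ℂ) (s : Finset ℕ) :
    ‖(∏ i ∈ s, (1 + f i)) - 1‖ ≤ (∏ i ∈ s, (1 + ‖f i‖)) - 1 := by
  induction s using Finset.cons_induction with
  | empty => simp
  | cons a s ha ih =>
    rw [Finset.prod_cons, Finset.prod_cons]
    have h1 : (1 + f a) * ∏ i ∈ s, (1 + f i) - 1
        = (1 + f a) * ((∏ i ∈ s, (1 + f i)) - 1) + f a := by ring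
    rw [h1]
    have h2 : ‖(1 + f a) * ((∏ i ∈ s, (1 + f i)) - 1) + f a‖
        ≤ ‖1 + f a‖ * ‖(∏ i ∈ s, (1 + f i)) - 1‖ + ‖f a‖ := by
      refine (norm_add_le _ _).trans ?_
      rw [norm_mul]
    refine h2.trans ?_
    have h3 : ‖(1 : ℂ) + f a‖ ≤ 1 + ‖f a‖ := (norm_add_le _ _).trans (by simp)
    have h4 := aux_one_le_prod (fun i => ‖f i‖) (fun i => norm_nonneg _) s
    nlinarith [norm_nonneg ((∏ i ∈ s, (1 + f i)) - 1), norm_nonneg (f a),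
      norm_nonneg (1 + f a), ih]

lemma aux_prod_le_exp (g : ℕ → ℝ) (hg : ∀ i, 0 ≤ g i) (s : Finset ℕ) :
    ∏ i ∈ s, (1 + g i) ≤ Real.exp (∑ i ∈ s, g i) := by
  rw [Real.exp_sum]
  refine Finset.prod_le_prod (fun i _ => by linarith [hg i]) (fun i _ => ?_)
  linarith [Real.add_one_le_exp (g i)]

lemma aux_hasProd (f : ℕ → ℂ) (hf : Summable fun i => ‖f i‖) :
    ∃ P, HasProd (fun i => 1 + f i) P := by
  have key : CauchySeq (fun s : Finset ℕ => ∏ i ∈ s, (1 + f i)) := by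
    rw [Metric.cauchySeq_iff']
    intro ε hε
    set C : ℝ := Real.exp (∑' i, ‖f i‖) with hC
    have hC1 : 1 ≤ C := by
      rw [hC]; rw [show (1:ℝ) = Real.exp 0 by simp]
      exact Real.exp_le_exp.2 (tsum_nonneg fun i => norm_nonneg _)
    -- find δ
    have hcont : ContinuousAt (fun δ : ℝ => C * (Real.exp δ - 1)) 0 := by fun_prop
    have h0 : (fun δ : ℝ => C * (Real.exp δ - 1)) 0 = 0 := by simp
    have hev : ∀ᶠ δ in nhds (0:ℝ), C * (Real.exp δ - 1) < ε := by
      have ht := hcont.tendsto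
      simp only [Real.exp_zero, sub_self, mul_zero] at ht
      exact ht.eventually_lt_const hε
    obtain ⟨δ, hδpos, hδ⟩ : ∃ δ > 0, C * (Real.exp δ - 1) < ε := by
      rcases Metric.eventually_nhds_iff.1 hev with ⟨δ, hδpos, h⟩
      refine ⟨δ/2, by linarith, h ?_⟩
      rw [Real.dist_eq, sub_zero, abs_of_nonneg (by linarith)]
      linarith
    obtain ⟨s₀, hs₀⟩ := summable_iff_vanishing.1 hf (Metric.ball 0 δ) (Metric.ball_mem_nhds 0 hδpos)
    refine ⟨s₀, fun s hs => ?_⟩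
    have hsplit : (∏ i ∈ s, (1 + f i)) = (∏ i ∈ s \ s₀, (1 + f i)) * ∏ i ∈ s₀, (1 + f i) :=
      (Finset.prod_sdiff hs).symm
    rw [dist_eq_norm, hsplit]
    have h1 : (∏ i ∈ s \ s₀, (1 + f i)) * (∏ i ∈ s₀, (1 + f i)) - ∏ i ∈ s₀, (1 + f i)
        = ((∏ i ∈ s \ s₀, (1 + f i)) - 1) * ∏ i ∈ s₀, (1 + f i) := by ring
    rw [h1, norm_mul]
    have h2 : ‖(∏ i ∈ s \ s₀, (1 + f i)) - 1‖ ≤ Real.exp δ - 1 := by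
      refine (aux_norm_prod_sub_one f _).trans ?_
      have h3 : ∑ i ∈ s \ s₀, ‖f i‖ < δ := by
        have := hs₀ (s \ s₀) Finset.sdiff_disjoint
        rw [Metric.mem_ball, dist_zero_right, Real.norm_eq_abs,
          abs_of_nonneg (Finset.sum_nonneg fun i _ => norm_nonneg _)] at this
        exact this
      have h4 := aux_prod_le_exp (fun i => ‖f i‖) (fun i => norm_nonneg _) (s \ s₀)
      have h5 : Real.exp (∑ i ∈ s \ s₀, ‖f i‖) ≤ Real.exp δ := Real.exp_le_exp.2 h3.le
      linarith
    have h6 : ‖∏ i ∈ s₀, (1 + f i)‖ ≤ C := by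
      refine le_trans (Finset.norm_prod_le s₀ fun i => 1 + f i) ?_
      refine (Finset.prod_le_prod (fun i _ => norm_nonneg _) (fun i _ => norm_add_le _ _)).trans ?_
      simp only [norm_one]
      refine (aux_prod_le_exp (fun i => ‖f i‖) (fun i => norm_nonneg _) s₀).trans ?_
      exact Real.exp_le_exp.2 (Summable.sum_le_tsum s₀ (fun i _ => norm_nonneg _) hf)
    calc ‖(∏ i ∈ s \ s₀, (1 + f i)) - 1‖ * ‖∏ i ∈ s₀, (1 + f i)‖
        ≤ (Real.exp δ - 1) * C := by
          refine mul_le_mul h2 h6 (norm_nonneg _) ?_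
          nlinarith [Real.add_one_le_exp δ]
      _ < ε := by rw [mul_comm]; exact hδ
  obtain ⟨a, ha⟩ := cauchySeq_tendsto_of_complete key
  exact ⟨a, ha⟩

open Finset

def Mx (t : Finset ℕ) : ℕ := t.sup id
def dd (t : Finset ℕ) : ℕ := ((range (Mx t)).filter (fun j => j ∉ t)).sup id
def sg (t : Finset ℕ) : ℕ := Mx t - dd t
noncomputable def mn (t : Finset ℕ) : ℕ := sInf (t : Set ℕ)

noncomputable def fr (t : Finset ℕ) : Finset ℕ :=
  if mn t ≤ sg t then insert (Mx t + 1) ((t.erase (mn t)).erase (Mx t + 1 - mn t))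
  else insert (sg t) (insert (dd t) (t.erase (Mx t)))

lemma fr_pos {t : Finset ℕ} (h : mn t ≤ sg t) :
    fr t = insert (Mx t + 1) ((t.erase (mn t)).erase (Mx t + 1 - mn t)) := by
  unfold fr; rw [if_pos h]

lemma fr_neg {t : Finset ℕ} (h : ¬ (mn t ≤ sg t)) :
    fr t = insert (sg t) (insert (dd t) (t.erase (Mx t))) := by
  unfold fr; rw [if_neg h]

def Bad (t : Finset ℕ) : Prop :=
  ∃ j, 1 ≤ j ∧ (t = Finset.Icc j (2*j-1) ∨ t = Finset.Icc (j+1) (2*j))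

variable {t : Finset ℕ}

lemma sup_id_mem (hne : t.Nonempty) : t.sup id ∈ t := by
  have h1 : t.sup id = t.max' hne := by
    rw [Finset.max'_eq_sup', Finset.sup'_eq_sup]
  rw [h1]; exact t.max'_mem hne

lemma Mx_mem (hne : t.Nonempty) : Mx t ∈ t := sup_id_mem hne

lemma le_Mx {a : ℕ} (ha : a ∈ t) : a ≤ Mx t := Finset.le_sup (f := id) ha

lemma mn_mem (hne : t.Nonempty) : mn t ∈ t := Nat.sInf_mem (Finset.coe_nonempty.2 hne)

lemma mn_le {a : ℕ} (ha : a ∈ t) : mn t ≤ a := Nat.sInf_le ha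

lemma mn_pos (hne : t.Nonempty) (h0 : 0 ∉ t) : 1 ≤ mn t := by
  rcases Nat.eq_zero_or_pos (mn t) with h | h
  · exact absurd (h ▸ mn_mem hne) h0
  · exact h

lemma Mx_pos (hne : t.Nonempty) (h0 : 0 ∉ t) : 1 ≤ Mx t :=
  le_trans (mn_pos hne h0) (le_Mx (mn_mem hne))

lemma dd_mem_D (hne : t.Nonempty) (h0 : 0 ∉ t) :
    dd t ∈ (range (Mx t)).filter (fun j => j ∉ t) := by
  apply sup_id_mem
  refine ⟨0, Finset.mem_filter.2 ⟨Finset.mem_range.2 ?_, h0⟩⟩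
  exact Mx_pos hne h0

lemma dd_not_mem (hne : t.Nonempty) (h0 : 0 ∉ t) : dd t ∉ t :=
  (Finset.mem_filter.1 (dd_mem_D hne h0)).2

lemma dd_lt_Mx (hne : t.Nonempty) (h0 : 0 ∉ t) : dd t < Mx t :=
  Finset.mem_range.1 (Finset.mem_filter.1 (dd_mem_D hne h0)).1

lemma le_dd {j : ℕ} (hj : j < Mx t) (hj2 : j ∉ t) : j ≤ dd t :=
  Finset.le_sup (f := id) (Finset.mem_filter.2 ⟨Finset.mem_range.2 hj, hj2⟩)

lemma staircase (hne : t.Nonempty) (h0 : 0 ∉ t) {j : ℕ}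
    (h1 : dd t < j) (h2 : j ≤ Mx t) : j ∈ t := by
  by_contra hj
  rcases lt_or_eq_of_le h2 with h | h
  · exact absurd (le_dd h hj) (not_le.2 h1)
  · exact hj (h ▸ Mx_mem hne)

lemma sg_pos (hne : t.Nonempty) (h0 : 0 ∉ t) : 1 ≤ sg t := by
  have := dd_lt_Mx hne h0
  unfold sg; omega

lemma dd_eq (hne : t.Nonempty) (h0 : 0 ∉ t) {c : ℕ} (hc1 : c ∉ t) (hc2 : c < Mx t)
    (hc3 : ∀ j, c < j → j ≤ Mx t → j ∈ t) : dd t = c := by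
  refine le_antisymm ?_ (le_dd hc2 hc1)
  by_contra h
  push_neg at h
  exact dd_not_mem hne h0 (hc3 _ h (le_of_lt (dd_lt_Mx hne h0)))

lemma interval_of_dd_lt_mn (hne : t.Nonempty) (h0 : 0 ∉ t) (h : dd t < mn t) :
    t = Finset.Icc (mn t) (Mx t) ∧ dd t = mn t - 1 := by
  have hsub : t = Finset.Icc (mn t) (Mx t) := by
    apply Finset.Subset.antisymm
    · intro a ha; exact Finset.mem_Icc.2 ⟨mn_le ha, le_Mx ha⟩
    · intro a ha
      rcases Finset.mem_Icc.1 ha with ⟨h1, h2⟩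
      exact staircase hne h0 (lt_of_lt_of_le h h1) h2
  refine ⟨hsub, ?_⟩
  have h1 : mn t - 1 ∉ t := by
    intro hmem
    have := mn_le hmem
    have := mn_pos hne h0
    omega
  have h2 : mn t - 1 < Mx t := by
    have := mn_pos hne h0
    have := le_Mx (mn_mem hne)
    omega
  have := le_dd h2 h1
  omega

lemma mn_lt_dd_or_interval (hne : t.Nonempty) (h0 : 0 ∉ t) :
    mn t < dd t ∨ (t = Finset.Icc (mn t) (Mx t) ∧ dd t = mn t - 1) := by
  rcases lt_or_ge (dd t) (mn t) with h | h
  · exact Or.inr (interval_of_dd_lt_mn hne h0 h)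
  · rcases lt_or_eq_of_le h with h | h
    · exact Or.inl h
    · exact absurd (h ▸ mn_mem hne) (dd_not_mem hne h0)

lemma mn_Icc {a b : ℕ} (hab : a ≤ b) : mn (Finset.Icc a b) = a := by
  refine le_antisymm (Nat.sInf_le (by simp [hab])) (le_csInf ⟨a, by simp [hab]⟩ ?_)
  intro c hc
  simp only [Finset.coe_Icc, Set.mem_Icc] at hc
  exact hc.1

lemma Mx_Icc {a b : ℕ} (hab : a ≤ b) : Mx (Finset.Icc a b) = b := by
  refine le_antisymm (Finset.sup_le ?_) (Finset.le_sup (f := id) (by simp [hab]))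
  intro c hc
  exact (Finset.mem_Icc.1 hc).2

lemma dd_Icc {a b : ℕ} (ha : 1 ≤ a) (hab : a ≤ b) : dd (Finset.Icc a b) = a - 1 := by
  have hne : (Finset.Icc a b).Nonempty := ⟨a, by simp [hab]⟩
  have h0 : 0 ∉ Finset.Icc a b := by simp; omega
  refine dd_eq hne h0 (by simp; omega) ?_ ?_
  · rw [Mx_Icc hab]; omega
  · intro j h1 h2
    rw [Mx_Icc hab] at h2
    simp only [Finset.mem_Icc]
    omega

lemma sg_Icc {a b : ℕ} (ha : 1 ≤ a) (hab : a ≤ b) : sg (Finset.Icc a b) = b - a + 1 := by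
  unfold sg
  rw [Mx_Icc hab, dd_Icc ha hab]
  omega

lemma bad_iff (hne : t.Nonempty) (h0 : 0 ∉ t) : Bad t ↔
    (t = Finset.Icc (mn t) (Mx t) ∧ (mn t = sg t ∨ mn t = sg t + 1)) := by
  constructor
  · rintro ⟨j, hj, h | h⟩
    · subst h
      have hab : j ≤ 2*j-1 := by omega
      rw [mn_Icc hab, Mx_Icc hab, sg_Icc hj hab]
      exact ⟨rfl, Or.inl (by omega)⟩
    · subst h
      have hab : j+1 ≤ 2*j := by omega
      rw [mn_Icc hab, Mx_Icc hab, sg_Icc (by omega) hab]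
      exact ⟨rfl, Or.inr (by omega)⟩
  · rintro ⟨hI, hm⟩
    have hab : mn t ≤ Mx t := le_Mx (mn_mem hne)
    have hm1 := mn_pos hne h0
    have hsg : sg t = Mx t - mn t + 1 := by
      conv_lhs => rw [hI]
      exact sg_Icc hm1 hab
    rcases hm with h | h
    · refine ⟨mn t, hm1, Or.inl ?_⟩
      have e1 : 2 * mn t - 1 = Mx t := by omega
      rw [e1]
      exact hI
    · refine ⟨mn t - 1, by omega, Or.inr ?_⟩
      have e1 : mn t - 1 + 1 = mn t := by omega
      have e2 : 2 * (mn t - 1) = Mx t := by omega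
      rw [e1, e2]
      exact hI

lemma caseA_main (hne : t.Nonempty) (h0 : 0 ∉ t) (hnb : ¬ Bad t) (hA : mn t ≤ sg t) :
    (fr t).sum id = t.sum id ∧ (fr t).card + 1 = t.card ∧
    (fr t).Nonempty ∧ (0 ∉ fr t) ∧ ¬ Bad (fr t) ∧ ¬ (mn (fr t) ≤ sg (fr t)) ∧
    fr (fr t) = t := by
  have hm1 := mn_pos hne h0
  have hdM := dd_lt_Mx hne h0
  have hdd0 := dd_not_mem hne h0
  have hMm : mn t ≤ Mx t := le_Mx (mn_mem hne)
  have hsgdef : sg t = Mx t - dd t := rfl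
  have hA' : mn t ≤ Mx t - dd t := hA
  have hM2 : 2 * mn t ≤ Mx t := by
    by_contra hcon
    push_neg at hcon
    rcases mn_lt_dd_or_interval hne h0 with h | ⟨hI, hdm⟩
    · omega
    · exact hnb ((bad_iff hne h0).2 ⟨hI, Or.inl (by omega)⟩)
  have hstep : Mx t + 1 - mn t ∈ t :=
    staircase hne h0 (by omega) (by omega)
  have hmm' : mn t ≠ Mx t + 1 - mn t := by omega
  set u := (t.erase (mn t)).erase (Mx t + 1 - mn t) with hu
  have hfr : fr t = insert (Mx t + 1) u := fr_pos hA
  have hut : u ⊆ t := Finset.Subset.trans (Finset.erase_subset _ _) (Finset.erase_subset _ _)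
  have hM1u : Mx t + 1 ∉ u := fun h => by have := le_Mx (hut h); omega
  have hstep' : Mx t + 1 - mn t ∈ t.erase (mn t) :=
    Finset.mem_erase.2 ⟨by omega, hstep⟩
  -- sum
  have e1 : u.sum id + (Mx t + 1 - mn t) = (t.erase (mn t)).sum id :=
    Finset.sum_erase_add _ _ hstep'
  have e2 : (t.erase (mn t)).sum id + mn t = t.sum id :=
    Finset.sum_erase_add _ _ (mn_mem hne)
  have e3 : (fr t).sum id = (Mx t + 1) + u.sum id := by
    rw [hfr, Finset.sum_insert hM1u]; rfl
  have hsum : (fr t).sum id = t.sum id := by omega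
  -- card
  have hcard2 : 2 ≤ t.card := Finset.one_lt_card.2
    ⟨mn t, mn_mem hne, Mx t + 1 - mn t, hstep, hmm'⟩
  have c1 : u.card = t.card - 2 := by
    rw [hu, Finset.card_erase_of_mem hstep', Finset.card_erase_of_mem (mn_mem hne)]
    omega
  have hcard : (fr t).card + 1 = t.card := by
    rw [hfr, Finset.card_insert_of_notMem hM1u]
    omega
  -- 0 ∉ fr t, nonempty
  have h0' : 0 ∉ fr t := by
    rw [hfr]
    intro h
    rcases Finset.mem_insert.1 h with h | h
    · omega
    · exact h0 (hut h)
  have hne2 : (fr t).Nonempty := by rw [hfr]; exact Finset.insert_nonempty _ _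
  -- structure of fr t
  have hMx' : Mx (fr t) = Mx t + 1 := by
    refine le_antisymm (Finset.sup_le ?_) ?_
    · intro a ha
      rw [hfr] at ha
      rcases Finset.mem_insert.1 ha with h | h
      · simp only [id_eq]; omega
      · have h2 := le_Mx (hut h); simp only [id_eq] at h2 ⊢; omega
    · refine Finset.le_sup (f := id) ?_
      rw [hfr]; exact Finset.mem_insert_self _ _
  have hmemgt : ∀ a ∈ fr t, mn t < a := by
    intro a ha
    rw [hfr] at ha
    rcases Finset.mem_insert.1 ha with h | h
    · omega
    · have h1 := mn_le (hut h)
      have h2 : a ≠ mn t := fun hc => (Finset.mem_erase.1 (Finset.mem_of_mem_erase h)).1 hc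
      omega
  have hmn' : mn t < mn (fr t) := hmemgt _ (mn_mem hne2)
  have hdd' : dd (fr t) = Mx t + 1 - mn t := by
    refine dd_eq hne2 h0' ?_ ?_ ?_
    · rw [hfr]
      intro h
      rcases Finset.mem_insert.1 h with h | h
      · omega
      · exact (Finset.mem_erase.1 h).1 rfl
    · rw [hMx']; omega
    · intro j hj1 hj2
      rw [hMx'] at hj2
      rw [hfr]
      rcases eq_or_lt_of_le hj2 with h | h
      · exact h ▸ Finset.mem_insert_self _ _
      · have hjt : j ∈ t := staircase hne h0 (by omega) (by omega)
        refine Finset.mem_insert.2 (Or.inr ?_)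
        refine Finset.mem_erase.2 ⟨by omega, Finset.mem_erase.2 ⟨by omega, hjt⟩⟩
  have hsg' : sg (fr t) = mn t := by
    unfold sg
    rw [hMx', hdd']
    omega
  have hnA' : ¬ (mn (fr t) ≤ sg (fr t)) := by rw [hsg']; omega
  have hnb' : ¬ Bad (fr t) := by
    rw [bad_iff hne2 h0']
    rintro ⟨hI, hc⟩
    have hdd2 : dd (fr t) = mn (fr t) - 1 := by
      conv_lhs => rw [hI]
      rw [dd_Icc (by omega) (le_Mx (mn_mem hne2))]
    rw [hsg'] at hc
    omega
  refine ⟨hsum, hcard, hne2, h0', hnb', hnA', ?_⟩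
  -- involution
  have hfr2 : fr (fr t) = insert (sg (fr t)) (insert (dd (fr t)) ((fr t).erase (Mx (fr t)))) :=
    fr_neg hnA'
  rw [hfr2, hsg', hdd', hMx']
  have hh1 : (fr t).erase (Mx t + 1) = u := by
    rw [hfr, Finset.erase_insert hM1u]
  rw [hh1, hu, Finset.insert_erase hstep', Finset.insert_erase (mn_mem hne)]

lemma caseB_main (hne : t.Nonempty) (h0 : 0 ∉ t) (hnb : ¬ Bad t) (hB : ¬ (mn t ≤ sg t)) :
    (fr t).sum id = t.sum id ∧ (fr t).card = t.card + 1 ∧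
    (fr t).Nonempty ∧ (0 ∉ fr t) ∧ ¬ Bad (fr t) ∧ (mn (fr t) ≤ sg (fr t)) ∧
    fr (fr t) = t := by
  have hm1 := mn_pos hne h0
  have hdM := dd_lt_Mx hne h0
  have hdd0 := dd_not_mem hne h0
  have hMm : mn t ≤ Mx t := le_Mx (mn_mem hne)
  have hsg1 := sg_pos hne h0
  have hsgdef : sg t = Mx t - dd t := rfl
  push_neg at hB
  have hsd : sg t < dd t := by
    by_contra hcon
    push_neg at hcon
    rcases mn_lt_dd_or_interval hne h0 with h | ⟨hI, hdm⟩
    · omega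
    · exact hnb ((bad_iff hne h0).2 ⟨hI, Or.inr (by omega)⟩)
  have hsm : sg t < mn t := hB
  have hsnt : sg t ∉ t := fun h => by have := mn_le h; omega
  have hdnM : dd t ∉ t.erase (Mx t) := fun h => hdd0 (Finset.mem_of_mem_erase h)
  set u := insert (dd t) (t.erase (Mx t)) with hu
  have hsnu : sg t ∉ u := by
    rw [hu]
    intro h
    rcases Finset.mem_insert.1 h with h | h
    · omega
    · exact hsnt (Finset.mem_of_mem_erase h)
  have hfr : fr t = insert (sg t) u := fr_neg (by omega)
  -- sum
  have e1 : u.sum id = dd t + (t.erase (Mx t)).sum id := by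
    rw [hu, Finset.sum_insert hdnM]; rfl
  have e2 : (t.erase (Mx t)).sum id + Mx t = t.sum id :=
    Finset.sum_erase_add _ _ (Mx_mem hne)
  have e3 : (fr t).sum id = sg t + u.sum id := by
    rw [hfr, Finset.sum_insert hsnu]; rfl
  have hsum : (fr t).sum id = t.sum id := by omega
  -- card
  have hcard : (fr t).card = t.card + 1 := by
    rw [hfr, Finset.card_insert_of_notMem hsnu, hu,
      Finset.card_insert_of_notMem hdnM, Finset.card_erase_of_mem (Mx_mem hne)]
    have : 1 ≤ t.card := Finset.card_pos.2 hne
    omega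
  have h0' : 0 ∉ fr t := by
    rw [hfr]
    intro h
    rcases Finset.mem_insert.1 h with h | h
    · omega
    · rcases Finset.mem_insert.1 (hu ▸ h) with h | h
      · omega
      · exact h0 (Finset.mem_of_mem_erase h)
  have hne2 : (fr t).Nonempty := by rw [hfr]; exact Finset.insert_nonempty _ _
  have humem : ∀ a ∈ u, a ≤ Mx t - 1 ∧ sg t < a := by
    intro a ha
    rcases Finset.mem_insert.1 (hu ▸ ha) with h | h
    · omega
    · have h1 := le_Mx (Finset.mem_of_mem_erase h)
      have h2 : a ≠ Mx t := (Finset.mem_erase.1 h).1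
      have h3 := mn_le (Finset.mem_of_mem_erase h)
      omega
  have hMx' : Mx (fr t) = Mx t - 1 := by
    refine le_antisymm (Finset.sup_le ?_) ?_
    · intro a ha
      rw [hfr] at ha
      rcases Finset.mem_insert.1 ha with h | h
      · simp only [id_eq]; omega
      · simp only [id_eq]; exact (humem a h).1
    · refine Finset.le_sup (f := id) ?_
      rw [hfr]
      rcases eq_or_lt_of_le (Nat.succ_le_of_lt hdM) with h | h
      · -- dd t = Mx t - 1
        refine Finset.mem_insert.2 (Or.inr (hu ▸ Finset.mem_insert.2 (Or.inl (by omega))))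
      · -- dd t < Mx t - 1
        have hMt : Mx t - 1 ∈ t := staircase hne h0 (by omega) (by omega)
        exact Finset.mem_insert.2 (Or.inr (hu ▸ Finset.mem_insert.2 (Or.inr
          (Finset.mem_erase.2 ⟨by omega, hMt⟩))))
  have hfrmem : ∀ a ∈ fr t, sg t ≤ a := by
    intro a ha
    rw [hfr] at ha
    rcases Finset.mem_insert.1 ha with h | h
    · omega
    · exact le_of_lt (humem _ h).2
  have hmn' : mn (fr t) = sg t :=
    le_antisymm (mn_le (by rw [hfr]; exact Finset.mem_insert_self _ _))
      (hfrmem _ (mn_mem hne2))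
  have hstair' : ∀ j, dd t ≤ j → j ≤ Mx t - 1 → j ∈ fr t := by
    intro j h1 h2
    rw [hfr]
    rcases eq_or_lt_of_le h1 with h | h
    · exact Finset.mem_insert.2 (Or.inr (hu ▸ Finset.mem_insert.2 (Or.inl h.symm)))
    · have hjt : j ∈ t := staircase hne h0 h (by omega)
      exact Finset.mem_insert.2 (Or.inr (hu ▸ Finset.mem_insert.2 (Or.inr
        (Finset.mem_erase.2 ⟨by omega, hjt⟩))))
  have hdd' : dd (fr t) < dd t := by
    by_contra hcon
    push_neg at hcon
    have h1 := dd_not_mem hne2 h0'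
    have h2 := dd_lt_Mx hne2 h0'
    rw [hMx'] at h2
    exact h1 (hstair' _ hcon (by omega))
  have hA' : mn (fr t) ≤ sg (fr t) := by
    have : sg (fr t) = Mx t - 1 - dd (fr t) := by unfold sg; rw [hMx']
    omega
  have hnb' : ¬ Bad (fr t) := by
    rw [bad_iff hne2 h0']
    rintro ⟨hI, hc⟩
    have hdd2 : dd (fr t) = mn (fr t) - 1 := by
      conv_lhs => rw [hI]
      rw [dd_Icc (by omega) (le_Mx (mn_mem hne2))]
    have hsg2 : sg (fr t) = Mx t - 1 - dd (fr t) := by unfold sg; rw [hMx']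
    omega
  refine ⟨hsum, hcard, hne2, h0', hnb', hA', ?_⟩
  have hfr2 : fr (fr t) = insert (Mx (fr t) + 1)
      (((fr t).erase (mn (fr t))).erase (Mx (fr t) + 1 - mn (fr t))) :=
    fr_pos hA'
  rw [hfr2, hmn', hMx']
  have hh0 : Mx t - 1 + 1 = Mx t := by omega
  rw [hh0]
  have hh0' : Mx t - sg t = dd t := by omega
  rw [hh0']
  have hh1 : (fr t).erase (sg t) = u := by rw [hfr, Finset.erase_insert hsnu]
  rw [hh1, hu, Finset.erase_insert hdnM, Finset.insert_erase (Mx_mem hne)]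

open scoped Classical

/-- combinatorial pentagonal coefficient -/
noncomputable def pentC (n : ℕ) : ℂ :=
  ∑ t ∈ (Finset.Icc 1 n).powerset.filter (fun t => t.sum id = n), (-1 : ℂ) ^ t.card

lemma pentC_zero : pentC 0 = 1 := by
  unfold pentC
  have h1 : Finset.Icc 1 0 = (∅ : Finset ℕ) := Finset.Icc_eq_empty (by omega)
  rw [h1]
  rw [Finset.powerset_empty, Finset.filter_singleton]
  norm_num

lemma mem_S_iff {n : ℕ} {a : Finset ℕ} :
    a ∈ (Finset.Icc 1 n).powerset.filter (fun t => t.sum id = n) ↔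
      a ⊆ Finset.Icc 1 n ∧ a.sum id = n := by
  simp [Finset.mem_filter, Finset.mem_powerset]

lemma S_nonempty_pos {n : ℕ} (hn : 1 ≤ n) {a : Finset ℕ}
    (ha : a ⊆ Finset.Icc 1 n ∧ a.sum id = n) : a.Nonempty ∧ 0 ∉ a := by
  constructor
  · rcases Finset.eq_empty_or_nonempty a with h | h
    · exfalso; rw [h] at ha; simp at ha; omega
    · exact h
  · intro h
    have := (Finset.mem_Icc.1 (ha.1 h)).1
    omega

lemma subset_Icc_of_sum {a : Finset ℕ} {n : ℕ} (h0 : ∀ b ∈ a, 1 ≤ b)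
    (hs : a.sum id = n) : a ⊆ Finset.Icc 1 n := by
  intro b hb
  refine Finset.mem_Icc.2 ⟨h0 b hb, ?_⟩
  calc b = id b := rfl
  _ ≤ a.sum id := Finset.single_le_sum (fun i _ => Nat.zero_le _) hb
  _ = n := hs

lemma pentC_eq_badsum (n : ℕ) (hn : 1 ≤ n) :
    pentC n = ∑ t ∈ ((Finset.Icc 1 n).powerset.filter
      (fun t => t.sum id = n)).filter Bad, (-1 : ℂ) ^ t.card := by
  unfold pentC
  set S := (Finset.Icc 1 n).powerset.filter (fun t => t.sum id = n) with hS
  rw [← Finset.sum_filter_add_sum_filter_not S Bad (fun t => (-1 : ℂ) ^ t.card)]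
  have hzero : ∑ t ∈ S.filter (fun t => ¬ Bad t), (-1 : ℂ) ^ t.card = 0 := by
    refine Finset.sum_involution (fun a _ => fr a) ?_ ?_ ?_ ?_
    · -- f a + f (fr a) = 0
      intro a ha
      rw [Finset.mem_filter] at ha
      obtain ⟨haS, hab⟩ := ha
      rw [hS, mem_S_iff] at haS
      obtain ⟨hne, h0⟩ := S_nonempty_pos hn haS
      by_cases hc : mn a ≤ sg a
      · obtain ⟨_, hcard, _⟩ := caseA_main hne h0 hab hc
        rw [← hcard, pow_succ]
        ring
      · obtain ⟨_, hcard, _⟩ := caseB_main hne h0 hab hc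
        rw [hcard, pow_succ]
        ring
    · -- g a ≠ a
      intro a ha _
      rw [Finset.mem_filter] at ha
      obtain ⟨haS, hab⟩ := ha
      rw [hS, mem_S_iff] at haS
      obtain ⟨hne, h0⟩ := S_nonempty_pos hn haS
      intro hcon
      by_cases hc : mn a ≤ sg a
      · obtain ⟨_, hcard, _⟩ := caseA_main hne h0 hab hc
        rw [hcon] at hcard
        omega
      · obtain ⟨_, hcard, _⟩ := caseB_main hne h0 hab hc
        rw [hcon] at hcard
        omega
    · -- g_mem
      intro a ha
      rw [Finset.mem_filter] at ha
      obtain ⟨haS, hab⟩ := ha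
      rw [hS, mem_S_iff] at haS
      obtain ⟨hne, h0⟩ := S_nonempty_pos hn haS
      have key : (fr a).sum id = n ∧ 0 ∉ fr a ∧ ¬ Bad (fr a) := by
        by_cases hc : mn a ≤ sg a
        · obtain ⟨hsum, _, _, h0', hnb', _⟩ := caseA_main hne h0 hab hc
          exact ⟨hsum.trans haS.2, h0', hnb'⟩
        · obtain ⟨hsum, _, _, h0', hnb', _⟩ := caseB_main hne h0 hab hc
          exact ⟨hsum.trans haS.2, h0', hnb'⟩
      rw [Finset.mem_filter]
      refine ⟨?_, key.2.2⟩
      rw [hS, mem_S_iff]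
      refine ⟨subset_Icc_of_sum ?_ key.1, key.1⟩
      intro b hb
      rcases Nat.eq_zero_or_pos b with h | h
      · exact absurd (h ▸ hb) key.2.1
      · exact h
    · -- involution
      intro a ha
      rw [Finset.mem_filter] at ha
      obtain ⟨haS, hab⟩ := ha
      rw [hS, mem_S_iff] at haS
      obtain ⟨hne, h0⟩ := S_nonempty_pos hn haS
      by_cases hc : mn a ≤ sg a
      · exact (caseA_main hne h0 hab hc).2.2.2.2.2.2
      · exact (caseB_main hne h0 hab hc).2.2.2.2.2.2
  rw [hzero, add_zero]

/-! Gauss sums for the exceptional sets -/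

lemma gauss_Ico (a b : ℕ) (hab : a ≤ b) :
    (∑ i ∈ Finset.Ico a b, i) * 2 + a * (a - 1) = b * (b - 1) := by
  have h1 := Finset.sum_Ico_consecutive (fun i => i) (Nat.zero_le a) hab
  have h2 := Finset.sum_range_id_mul_two a
  have h3 := Finset.sum_range_id_mul_two b
  rw [Finset.range_eq_Ico] at h2 h3
  linarith

lemma sumE1 (k : ℕ) : (Finset.Icc (k+1) (2*k+1)).sum id * 2 = (k+1)*(3*k+2) := by
  have hIcc : Finset.Icc (k+1) (2*k+1) = Finset.Ico (k+1) (2*k+2) := by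
    rw [← Finset.Ico_add_one_right_eq_Icc]; rfl
  rw [hIcc]
  have h := gauss_Ico (k+1) (2*k+2) (by omega)
  have e1 : (k+1) * ((k+1) - 1) = (k+1)*k := by simp
  have e2 : (2*k+2) * ((2*k+2) - 1) = (2*k+2)*(2*k+1) := by simp
  rw [e1, e2] at h
  have hsum : (Finset.Ico (k+1) (2*k+2)).sum id = ∑ i ∈ Finset.Ico (k+1) (2*k+2), i := rfl
  rw [hsum]
  nlinarith [h]

lemma sumE2 (k : ℕ) : (Finset.Icc (k+2) (2*k+2)).sum id * 2 = (k+1)*(3*k+4) := by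
  have hIcc : Finset.Icc (k+2) (2*k+2) = Finset.Ico (k+2) (2*k+3) := by
    rw [← Finset.Ico_add_one_right_eq_Icc]; rfl
  rw [hIcc]
  have h := gauss_Ico (k+2) (2*k+3) (by omega)
  have e1 : (k+2) * ((k+2) - 1) = (k+2)*(k+1) := by simp
  have e2 : (2*k+3) * ((2*k+3) - 1) = (2*k+3)*(2*k+2) := by simp
  rw [e1, e2] at h
  have hsum : (Finset.Ico (k+2) (2*k+3)).sum id = ∑ i ∈ Finset.Ico (k+2) (2*k+3), i := rfl
  rw [hsum]
  nlinarith [h]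

/-! injectivity helpers -/

lemma helper1 {a b : ℕ} (h : (a+1)*(3*a+2) = (b+1)*(3*b+2)) : a = b := by
  rcases lt_trichotomy a b with hl | he | hl
  · nlinarith
  · exact he
  · nlinarith

lemma helper2 {a b : ℕ} (h : (a+1)*(3*a+4) = (b+1)*(3*b+4)) : a = b := by
  rcases lt_trichotomy a b with hl | he | hl
  · nlinarith
  · exact he
  · nlinarith

lemma helper3 {a b : ℕ} (h : (a+1)*(3*a+2) = (b+1)*(3*b+4)) : False := by
  -- j(3j-1) = i(3i+1) with j = a+1, i = b+1 impossible
  have h' : ((a:ℤ)+1)*(3*a+2) = ((b:ℤ)+1)*(3*b+4) := by exact_mod_cast h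
  have key : (((a:ℤ)+1) + ((b:ℤ)+1)) * (3*(((a:ℤ)+1) - ((b:ℤ)+1)) - 1) = 0 := by ring_nf; linarith [h']
  rcases mul_eq_zero.1 key with h1 | h1
  · omega
  · omega

lemma E1_pos (k : ℕ) : 1 ≤ (k+1)*(3*k+2) := Nat.one_le_iff_ne_zero.2 (by positivity)
lemma E2_pos (k : ℕ) : 1 ≤ (k+1)*(3*k+4) := Nat.one_le_iff_ne_zero.2 (by positivity)

lemma E1_mem {k n : ℕ} (hsum : 2*n = (k+1)*(3*k+2)) :
    Finset.Icc (k+1) (2*k+1) ∈ ((Finset.Icc 1 n).powerset.filter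
      (fun t => t.sum id = n)).filter Bad := by
  have hs : (Finset.Icc (k+1) (2*k+1)).sum id = n := by
    have h := sumE1 k
    rw [← hsum] at h
    omega
  refine Finset.mem_filter.2 ⟨mem_S_iff.2 ⟨subset_Icc_of_sum ?_ hs, hs⟩, ?_⟩
  · intro b hb
    exact le_trans (by omega) (Finset.mem_Icc.1 hb).1
  · exact ⟨k+1, by omega, Or.inl (by rw [show 2*(k+1)-1 = 2*k+1 by omega])⟩

lemma E2_mem {k n : ℕ} (hsum : 2*n = (k+1)*(3*k+4)) :
    Finset.Icc (k+2) (2*k+2) ∈ ((Finset.Icc 1 n).powerset.filter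
      (fun t => t.sum id = n)).filter Bad := by
  have hs : (Finset.Icc (k+2) (2*k+2)).sum id = n := by
    have h := sumE2 k
    rw [← hsum] at h
    omega
  refine Finset.mem_filter.2 ⟨mem_S_iff.2 ⟨subset_Icc_of_sum ?_ hs, hs⟩, ?_⟩
  · intro b hb
    exact le_trans (by omega) (Finset.mem_Icc.1 hb).1
  · exact ⟨k+1, by omega, Or.inr (by rw [show (k+1)+1 = k+2 by omega, show 2*(k+1) = 2*k+2 by omega])⟩

/-- any bad member of the fiber gives a pentagonal representation of `2n`. -/
lemma bad_mem_cases {n : ℕ} {t : Finset ℕ}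
    (ht : t ∈ ((Finset.Icc 1 n).powerset.filter (fun t => t.sum id = n)).filter Bad) :
    (∃ k, 2*n = (k+1)*(3*k+2) ∧ t = Finset.Icc (k+1) (2*k+1)) ∨
    (∃ k, 2*n = (k+1)*(3*k+4) ∧ t = Finset.Icc (k+2) (2*k+2)) := by
  rw [Finset.mem_filter] at ht
  obtain ⟨htS, j, hj, hE | hE⟩ := ht
  · left
    refine ⟨j - 1, ?_, ?_⟩
    · have h1 : t.sum id = n := (mem_S_iff.1 htS).2
      have h2 : Finset.Icc (j-1+1) (2*(j-1)+1) = Finset.Icc j (2*j-1) := by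
        rw [show j-1+1 = j by omega, show 2*(j-1)+1 = 2*j-1 by omega]
      have h3 := sumE1 (j-1)
      rw [h2, ← hE, h1] at h3
      omega
    · rw [hE, show j-1+1 = j by omega, show 2*(j-1)+1 = 2*j-1 by omega]
  · right
    refine ⟨j - 1, ?_, ?_⟩
    · have h1 : t.sum id = n := (mem_S_iff.1 htS).2
      have h2 : Finset.Icc (j-1+2) (2*(j-1)+2) = Finset.Icc (j+1) (2*j) := by
        rw [show j-1+2 = j+1 by omega, show 2*(j-1)+2 = 2*j by omega]
      have h3 := sumE2 (j-1)
      rw [h2, ← hE, h1] at h3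
      omega
    · rw [hE, show j-1+2 = j+1 by omega, show 2*(j-1)+2 = 2*j by omega]

lemma pentC_E1 {k n : ℕ} (hsum : 2*n = (k+1)*(3*k+2)) : pentC n = (-1) ^ (k+1) := by
  have hn : 1 ≤ n := by have := E1_pos k; omega
  rw [pentC_eq_badsum n hn]
  have hsingle : ((Finset.Icc 1 n).powerset.filter (fun t => t.sum id = n)).filter Bad
      = {Finset.Icc (k+1) (2*k+1)} := by
    refine Finset.eq_singleton_iff_unique_mem.2 ⟨E1_mem hsum, ?_⟩
    intro t ht
    rcases bad_mem_cases ht with ⟨k', h1, h2⟩ | ⟨k', h1, h2⟩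
    · have : k' = k := helper1 (h1.symm.trans hsum)
      rw [h2, this]
    · exact (helper3 (hsum.symm.trans h1)).elim
  rw [hsingle, Finset.sum_singleton, Nat.card_Icc]
  congr 1
  omega

lemma pentC_E2 {k n : ℕ} (hsum : 2*n = (k+1)*(3*k+4)) : pentC n = (-1) ^ (k+1) := by
  have hn : 1 ≤ n := by have := E2_pos k; omega
  rw [pentC_eq_badsum n hn]
  have hsingle : ((Finset.Icc 1 n).powerset.filter (fun t => t.sum id = n)).filter Bad
      = {Finset.Icc (k+2) (2*k+2)} := by
    refine Finset.eq_singleton_iff_unique_mem.2 ⟨E2_mem hsum, ?_⟩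
    intro t ht
    rcases bad_mem_cases ht with ⟨k', h1, h2⟩ | ⟨k', h1, h2⟩
    · exact (helper3 (h1.symm.trans hsum)).elim
    · have : k' = k := helper2 (h1.symm.trans hsum)
      rw [h2, this]
  rw [hsingle, Finset.sum_singleton, Nat.card_Icc]
  congr 1
  omega

lemma pentC_zero' {n : ℕ} (hn : 1 ≤ n)
    (h1 : ∀ k, 2*n ≠ (k+1)*(3*k+2)) (h2 : ∀ k, 2*n ≠ (k+1)*(3*k+4)) : pentC n = 0 := by
  rw [pentC_eq_badsum n hn]
  have hempty : ((Finset.Icc 1 n).powerset.filter (fun t => t.sum id = n)).filter Bad = ∅ := by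
    rw [Finset.eq_empty_iff_forall_notMem]
    intro t ht
    rcases bad_mem_cases ht with ⟨k', hk, _⟩ | ⟨k', hk, _⟩
    · exact h1 k' hk
    · exact h2 k' hk
  rw [hempty, Finset.sum_empty]

/-! ### The integer-indexed pentagonal exponents -/

def eZ (j : ℤ) : ℕ := (j * (3*j - 1) / 2).toNat

lemma pent_nonneg (j : ℤ) : 0 ≤ j * (3*j - 1) := by
  rcases le_or_gt j 0 with h | h
  · have h2 : 0 ≤ (-j) * (1 - 3*j) := mul_nonneg (by linarith) (by linarith)
    nlinarith [h2]
  · exact mul_nonneg (by linarith) (by linarith)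

lemma pent_even (j : ℤ) : 2 ∣ j * (3*j - 1) := by
  rcases Int.even_or_odd j with ⟨c, hc⟩ | ⟨c, hc⟩
  · exact ⟨c * (3*j - 1), by rw [hc]; ring⟩
  · exact ⟨j * (3*c + 1), by rw [hc]; ring⟩

lemma toNat_full (j : ℤ) : (j * (3*j - 1)).toNat = 2 * eZ j := by
  have h1 := pent_nonneg j
  have h2 := pent_even j
  unfold eZ
  omega

lemma eZ_zero : eZ 0 = 0 := by unfold eZ; norm_num

lemma two_eZ_pos (k : ℕ) : 2 * eZ ((k:ℤ)+1) = (k+1)*(3*k+2) := by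
  rw [← toNat_full]
  have h : ((k:ℤ)+1) * (3*((k:ℤ)+1) - 1) = (((k+1)*(3*k+2) : ℕ) : ℤ) := by push_cast; ring
  rw [h, Int.toNat_natCast]

lemma two_eZ_neg (k : ℕ) : 2 * eZ (-((k:ℤ)+1)) = (k+1)*(3*k+4) := by
  rw [← toNat_full]
  have h : (-((k:ℤ)+1)) * (3*(-((k:ℤ)+1)) - 1) = (((k+1)*(3*k+4) : ℕ) : ℤ) := by push_cast; ring
  rw [h, Int.toNat_natCast]

lemma int_cases (j : ℤ) : j = 0 ∨ (∃ k : ℕ, j = (k:ℤ)+1) ∨ (∃ k : ℕ, j = -((k:ℤ)+1)) := by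
  rcases j with n | n
  · rcases n with _ | m
    · exact Or.inl rfl
    · exact Or.inr (Or.inl ⟨m, by rw [Int.ofNat_eq_natCast]; push_cast; ring⟩)
  · exact Or.inr (Or.inr ⟨n, Int.negSucc_eq n⟩)

lemma eZ_injective : Function.Injective eZ := by
  intro a b h
  rcases int_cases a with rfl | ⟨k1, rfl⟩ | ⟨k1, rfl⟩ <;>
    rcases int_cases b with rfl | ⟨k2, rfl⟩ | ⟨k2, rfl⟩
  · rfl
  · exfalso
    have h1 := two_eZ_pos k2
    have h2 := E1_pos k2
    rw [← h, eZ_zero] at h1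
    omega
  · exfalso
    have h1 := two_eZ_neg k2
    have h2 := E2_pos k2
    rw [← h, eZ_zero] at h1
    omega
  · exfalso
    have h1 := two_eZ_pos k1
    have h2 := E1_pos k1
    rw [h, eZ_zero] at h1
    omega
  · have hXX : (k1+1)*(3*k1+2) = (k2+1)*(3*k2+2) := by
      rw [← two_eZ_pos k1, ← two_eZ_pos k2, h]
    rw [helper1 hXX]
  · exfalso
    refine helper3 (a := k1) (b := k2) ?_
    rw [← two_eZ_pos k1, ← two_eZ_neg k2, h]
  · exfalso
    have h1 := two_eZ_neg k1
    have h2 := E2_pos k1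
    rw [h, eZ_zero] at h1
    omega
  · exfalso
    refine helper3 (a := k2) (b := k1) ?_
    rw [← two_eZ_pos k2, ← two_eZ_neg k1, h]
  · have hXX : (k1+1)*(3*k1+4) = (k2+1)*(3*k2+4) := by
      rw [← two_eZ_neg k1, ← two_eZ_neg k2, h]
    rw [helper2 hXX]

lemma pentC_eZ (j : ℤ) : pentC (eZ j) = (-1 : ℂ) ^ j := by
  rcases int_cases j with rfl | ⟨k, rfl⟩ | ⟨k, rfl⟩
  · rw [eZ_zero, pentC_zero, zpow_zero]
  · rw [pentC_E1 (two_eZ_pos k)]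
    have h : ((k:ℤ)+1) = ((k+1 : ℕ) : ℤ) := by push_cast; ring
    rw [h, zpow_natCast]
  · rw [pentC_E2 (two_eZ_neg k)]
    have h : (-((k:ℤ)+1)) = -((k+1 : ℕ) : ℤ) := by push_cast; ring
    rw [h, zpow_neg, zpow_natCast]
    have hsq : ((-1:ℂ) ^ (k+1)) * ((-1:ℂ) ^ (k+1)) = 1 := by
      rw [← pow_add]
      exact Even.neg_one_pow ⟨k+1, by ring⟩
    exact (inv_eq_of_mul_eq_one_right hsq).symm

lemma pentC_not_in_range {n : ℕ} (h : ∀ j : ℤ, eZ j ≠ n) : pentC n = 0 := by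
  have hn : 1 ≤ n := by
    rcases Nat.eq_zero_or_pos n with h0 | h0
    · exact absurd (h0 ▸ eZ_zero) (h 0)
    · exact h0
  refine pentC_zero' hn ?_ ?_
  · intro k hk
    refine h ((k:ℤ)+1) ?_
    have := two_eZ_pos k
    omega
  · intro k hk
    refine h (-((k:ℤ)+1)) ?_
    have := two_eZ_neg k
    omega

lemma pentC_norm (n : ℕ) : ‖pentC n‖ ≤ 1 := by
  by_cases hr : ∃ j : ℤ, eZ j = n
  · obtain ⟨j, rfl⟩ := hr
    rw [pentC_eZ, norm_zpow]
    norm_num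
  · push_neg at hr
    rw [pentC_not_in_range hr]
    norm_num

/-! ### Analytic assembly -/

lemma summable_pentC {y : ℂ} (hy : ‖y‖ < 1) : Summable (fun n : ℕ => pentC n * y ^ n) := by
  refine Summable.of_norm_bounded
    (summable_geometric_of_lt_one (norm_nonneg y) hy) (fun n => ?_)
  rw [norm_mul, norm_pow]
  exact mul_le_of_le_one_left (pow_nonneg (norm_nonneg y) n) (pentC_norm n)

lemma hasSum_pentZ {y : ℂ} (hy : ‖y‖ < 1) :
    HasSum (fun j : ℤ => (-1 : ℂ) ^ j * y ^ (eZ j)) (∑' n : ℕ, pentC n * y ^ n) := by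
  have h1 : HasSum (fun n : ℕ => pentC n * y ^ n) (∑' n : ℕ, pentC n * y ^ n) :=
    (summable_pentC hy).hasSum
  have h2 := (Function.Injective.hasSum_iff (f := fun n : ℕ => pentC n * y ^ n)
    eZ_injective ?_).2 h1
  · refine HasSum.congr_fun h2 ?_
    intro j
    simp only [Function.comp]
    rw [pentC_eZ]
  · intro n hn
    rw [pentC_not_in_range, zero_mul]
    intro j hj
    exact hn ⟨j, hj⟩

/-- expansion of the finite product -/
lemma prod_range_expand (y : ℂ) (K : ℕ) :
    ∏ k ∈ Finset.range K, (1 - y ^ (k+1)) =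
      ∑ t ∈ (Finset.Icc 1 K).powerset, (-1 : ℂ) ^ t.card * y ^ (t.sum id) := by
  have hIcc : ∏ k ∈ Finset.range K, (1 - y ^ (k+1)) = ∏ i ∈ Finset.Icc 1 K, (1 - y ^ i) := by
    induction K with
    | zero => simp
    | succ n ih =>
      rw [Finset.prod_range_succ, ih, ← Finset.insert_Icc_right_eq_Icc_add_one (by omega),
        Finset.prod_insert (by simp)]
      ring
  rw [hIcc]
  have hadd : ∀ i : ℕ, (1 : ℂ) - y ^ i = (fun i => -(y^i)) i + (fun _ => (1:ℂ)) i := by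
    intro i; simp; ring
  rw [Finset.prod_congr rfl (fun i _ => hadd i), Finset.prod_add]
  refine Finset.sum_congr rfl (fun t ht => ?_)
  rw [Finset.prod_const_one, mul_one]
  have : ∀ i : ℕ, -(y^i) = (-1 : ℂ) * y^i := by intro i; ring
  rw [Finset.prod_congr rfl (fun i _ => this i), Finset.prod_mul_distrib,
    Finset.prod_const, Finset.prod_pow_eq_pow_sum]
  rfl

/-- the real version, for bounding -/
lemma prod_range_expand_real (s : ℝ) (K : ℕ) :
    ∑ t ∈ (Finset.Icc 1 K).powerset, s ^ (t.sum id) = ∏ i ∈ Finset.Icc 1 K, (1 + s ^ i) := by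
  have hadd : ∀ i : ℕ, (1 : ℝ) + s ^ i = (fun i => (s^i)) i + (fun _ => (1:ℝ)) i := by
    intro i; simp [add_comm]
  rw [Finset.prod_congr rfl (fun i _ => hadd i), Finset.prod_add]
  refine (Finset.sum_congr rfl (fun t ht => ?_)).symm
  rw [Finset.prod_const_one, mul_one, Finset.prod_pow_eq_pow_sum]
  rfl

lemma fiber_eq {K n : ℕ} (hn : n ≤ K) :
    ((Finset.Icc 1 K).powerset.filter (fun t => t.sum id ≤ K)).filter
        (fun t => t.sum id = n) =
      (Finset.Icc 1 n).powerset.filter (fun t => t.sum id = n) := by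
  ext t
  simp only [Finset.mem_filter, Finset.mem_powerset]
  constructor
  · rintro ⟨⟨h1, h2⟩, h3⟩
    refine ⟨subset_Icc_of_sum (fun b hb => (Finset.mem_Icc.1 (h1 hb)).1) h3, h3⟩
  · rintro ⟨h1, h2⟩
    exact ⟨⟨h1.trans (Finset.Icc_subset_Icc le_rfl hn), by omega⟩, h2⟩

lemma main_sum_eq {y : ℂ} (K : ℕ) :
    ∑ t ∈ (Finset.Icc 1 K).powerset.filter (fun t => t.sum id ≤ K),
        (-1 : ℂ) ^ t.card * y ^ (t.sum id) =
      ∑ n ∈ Finset.range (K+1), pentC n * y ^ n := by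
  rw [← Finset.sum_fiberwise_of_maps_to (g := fun t => t.sum id)
    (t := Finset.range (K+1)) (fun t ht => Finset.mem_range.2
      (by have := (Finset.mem_filter.1 ht).2; omega))]
  refine Finset.sum_congr rfl (fun n hn => ?_)
  have hnK : n ≤ K := by have := Finset.mem_range.1 hn; omega
  rw [fiber_eq hnK]
  unfold pentC
  rw [Finset.sum_mul]
  refine Finset.sum_congr rfl (fun t ht => ?_)
  rw [(Finset.mem_filter.1 ht).2]

lemma sqrt_lt_one' {r : ℝ} (h0 : 0 ≤ r) (h1 : r < 1) : Real.sqrt r < 1 := by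
  nlinarith [Real.mul_self_sqrt h0, Real.sqrt_nonneg r]

lemma tail_bound {y : ℂ} (hy : ‖y‖ < 1) (K : ℕ) :
    ‖∑ t ∈ (Finset.Icc 1 K).powerset.filter (fun t => ¬ t.sum id ≤ K),
        (-1 : ℂ) ^ t.card * y ^ (t.sum id)‖ ≤
      (Real.sqrt ‖y‖)^(K+1) * Real.exp ((1 - Real.sqrt ‖y‖)⁻¹) := by
  set s : ℝ := Real.sqrt ‖y‖ with hsdef
  have hs0 : 0 ≤ s := Real.sqrt_nonneg _
  have hs1 : s < 1 := sqrt_lt_one' (norm_nonneg y) hy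
  have hss : s * s = ‖y‖ := Real.mul_self_sqrt (norm_nonneg y)
  calc ‖∑ t ∈ (Finset.Icc 1 K).powerset.filter (fun t => ¬ t.sum id ≤ K),
        (-1 : ℂ) ^ t.card * y ^ (t.sum id)‖
      ≤ ∑ t ∈ (Finset.Icc 1 K).powerset.filter (fun t => ¬ t.sum id ≤ K),
        ‖(-1 : ℂ) ^ t.card * y ^ (t.sum id)‖ := norm_sum_le _ _
    _ ≤ ∑ t ∈ (Finset.Icc 1 K).powerset.filter (fun t => ¬ t.sum id ≤ K),
        s^(K+1) * s ^ (t.sum id) := by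
        refine Finset.sum_le_sum (fun t ht => ?_)
        have hKt : K + 1 ≤ t.sum id := by
          have := (Finset.mem_filter.1 ht).2
          omega
        have hnorm : ‖(-1 : ℂ) ^ t.card * y ^ (t.sum id)‖ = ‖y‖ ^ (t.sum id) := by
          rw [norm_mul, norm_pow, norm_pow, norm_neg, norm_one, one_pow, one_mul]
        rw [hnorm, ← hss, mul_pow]
        refine mul_le_mul ?_ le_rfl (pow_nonneg hs0 _) (pow_nonneg hs0 _)
        exact pow_le_pow_of_le_one hs0 hs1.le hKt
    _ = s^(K+1) * ∑ t ∈ (Finset.Icc 1 K).powerset.filter (fun t => ¬ t.sum id ≤ K),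
        s ^ (t.sum id) := by rw [Finset.mul_sum]
    _ ≤ s^(K+1) * ∑ t ∈ (Finset.Icc 1 K).powerset, s ^ (t.sum id) := by
        refine mul_le_mul_of_nonneg_left ?_ (pow_nonneg hs0 _)
        exact Finset.sum_le_sum_of_subset_of_nonneg (Finset.filter_subset _ _)
          (fun t _ _ => pow_nonneg hs0 _)
    _ ≤ s^(K+1) * Real.exp ((1 - s)⁻¹) := by
        refine mul_le_mul_of_nonneg_left ?_ (pow_nonneg hs0 _)
        rw [prod_range_expand_real]
        refine le_trans (aux_prod_le_exp (fun i => s^i) (fun i => pow_nonneg hs0 _) _) ?_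
        refine Real.exp_le_exp.2 ?_
        refine le_trans (Summable.sum_le_tsum _ (fun i _ => pow_nonneg hs0 _)
          (summable_geometric_of_lt_one hs0 hs1)) ?_
        rw [tsum_geometric_of_lt_one hs0 hs1]

lemma tendsto_prod_to_T {y : ℂ} (hy : ‖y‖ < 1) :
    Filter.Tendsto (fun K => ∏ k ∈ Finset.range K, (1 - y^(k+1))) Filter.atTop
      (nhds (∑' n : ℕ, pentC n * y ^ n)) := by
  set s : ℝ := Real.sqrt ‖y‖ with hsdef
  have hs0 : 0 ≤ s := Real.sqrt_nonneg _
  have hs1 : s < 1 := sqrt_lt_one' (norm_nonneg y) hy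
  have hsplit : ∀ K, ∏ k ∈ Finset.range K, (1 - y^(k+1)) =
      (∑ n ∈ Finset.range (K+1), pentC n * y ^ n) +
      ∑ t ∈ (Finset.Icc 1 K).powerset.filter (fun t => ¬ t.sum id ≤ K),
        (-1 : ℂ) ^ t.card * y ^ (t.sum id) := by
    intro K
    rw [prod_range_expand, ← main_sum_eq,
      ← Finset.sum_filter_add_sum_filter_not ((Finset.Icc 1 K).powerset)
        (fun t => t.sum id ≤ K) (fun t => (-1 : ℂ) ^ t.card * y ^ (t.sum id))]
  have hA : Filter.Tendsto (fun K => ∑ n ∈ Finset.range (K+1), pentC n * y ^ n)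
      Filter.atTop (nhds (∑' n : ℕ, pentC n * y ^ n)) := by
    have h := (summable_pentC hy).hasSum.tendsto_sum_nat
    exact (Filter.tendsto_add_atTop_iff_nat 1).2 h
  have hR : Filter.Tendsto (fun K => ∑ t ∈ (Finset.Icc 1 K).powerset.filter
      (fun t => ¬ t.sum id ≤ K), (-1 : ℂ) ^ t.card * y ^ (t.sum id)) Filter.atTop (nhds 0) := by
    refine squeeze_zero_norm (fun K => tail_bound hy K) ?_
    have h1 : Filter.Tendsto (fun K : ℕ => s ^ K) Filter.atTop (nhds 0) :=
      tendsto_pow_atTop_nhds_zero_of_lt_one hs0 hs1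
    have h2 := h1.mul_const (s * Real.exp ((1 - s)⁻¹))
    rw [zero_mul] at h2
    refine h2.congr (fun K => ?_)
    rw [pow_succ]
    ring
  have := hA.add hR
  rw [add_zero] at this
  exact this.congr (fun K => (hsplit K).symm)

lemma hasProd_pnt {y : ℂ} (hy : ‖y‖ < 1) :
    HasProd (fun k : ℕ => 1 - y^(k+1)) (∑' j : ℤ, (-1 : ℂ) ^ j * y ^ (eZ j)) := by
  have hsum : Summable (fun k : ℕ => ‖-(y^(k+1))‖) := by
    refine ((summable_geometric_of_lt_one (norm_nonneg y) hy).mul_left ‖y‖).congr (fun n => ?_)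
    rw [norm_neg, norm_pow, pow_succ]
    ring
  obtain ⟨P, hP⟩ := aux_hasProd _ hsum
  have heq : (fun i : ℕ => 1 + -(y^(i+1))) = (fun k : ℕ => 1 - y^(k+1)) :=
    funext (fun i => by ring)
  rw [heq] at hP
  have hPT : P = ∑' n : ℕ, pentC n * y ^ n :=
    tendsto_nhds_unique hP.tendsto_prod_nat (tendsto_prod_to_T hy)
  have hZ : (∑' j : ℤ, (-1 : ℂ) ^ j * y ^ (eZ j)) = P :=
    ((hasSum_pentZ hy).tsum_eq).trans hPT.symm
  rw [hZ]
  exact hP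

/-- Goldbach's identity: for `‖x‖ < 1`, the pentagonal series in `x²` times the
product `∏_{m=1}^∞ (1 - x^{2m-1})` over odd exponents equals the pentagonal
series in `x`. -/
theorem goldbach_pentagonal_identity (x : ℂ) (hx : ‖x‖ < 1) :
    (∑' n : ℤ, (-1 : ℂ) ^ n * x ^ (n * (3 * n - 1)).toNat) *
      ∏' m : ℕ, (1 - x ^ (2 * m + 1)) =
    ∑' n : ℤ, (-1 : ℂ) ^ n * x ^ (n * (3 * n - 1) / 2).toNat := by
  have hx2 : ‖x^2‖ < 1 := by
    rw [norm_pow]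
    nlinarith [norm_nonneg x]
  have hsum : Summable (fun m : ℕ => ‖-(x^(2*m+1))‖) := by
    have hgeo : Summable (fun m : ℕ => ‖x^2‖^m) :=
      summable_geometric_of_lt_one (norm_nonneg _) hx2
    refine (hgeo.mul_left ‖x‖).congr (fun m => ?_)
    simp only [norm_neg, norm_pow]
    ring
  obtain ⟨Q, hQ0⟩ := aux_hasProd _ hsum
  have heq : (fun i : ℕ => 1 + -(x^(2*i+1))) = (fun m : ℕ => 1 - x^(2*m+1)) :=
    funext (fun i => by ring)
  rw [heq] at hQ0
  have h1 := hasProd_pnt hx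
  have h2 := hasProd_pnt hx2
  have ho : HasProd (fun k : ℕ => 1 - x^(2*k+1+1)) (∑' j : ℤ, (-1:ℂ)^j * (x^2)^(eZ j)) := by
    have heq2 : (fun k : ℕ => 1 - (x^2)^(k+1)) = (fun k : ℕ => 1 - x^(2*k+1+1)) :=
      funext (fun k => by rw [← pow_mul, show 2*(k+1) = 2*k+1+1 from by ring])
    rw [heq2] at h2
    exact h2
  have hcomb : HasProd (fun k : ℕ => 1 - x^(k+1))
      (Q * ∑' j : ℤ, (-1:ℂ)^j * (x^2)^(eZ j)) :=
    HasProd.even_mul_odd (f := fun k : ℕ => 1 - x^(k+1)) hQ0 ho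
  have huniq : (∑' j : ℤ, (-1:ℂ)^j * x^(eZ j)) =
      Q * ∑' j : ℤ, (-1:ℂ)^j * (x^2)^(eZ j) := h1.unique hcomb
  have hterm : ∀ n : ℤ, (-1:ℂ)^n * x ^ (n * (3*n-1)).toNat = (-1:ℂ)^n * (x^2)^(eZ n) := by
    intro n
    rw [toNat_full n, pow_mul]
  rw [tsum_congr hterm, hQ0.tprod_eq, mul_comm]
  exact huniq.symm
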